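/- For all x > 0 and ν ∈ [0,1]: exp((1/2)·ν·(1−ν)·(1 − min(1,x)/max(1,x))²)·x^ν ≤ 1 − ν + ν·x ≤ exp((1/2)·ν·(1−ν)·(max(1,x)/min(1,x) − 1)²)·x^ν. -/

import Mathlib

open Real Set

private lemma Dpos {ν x : ℝ} (hx : 0 < x) (h0 : 0 ≤ ν) (h1 : ν ≤ 1) :
    0 < 1 - ν + ν * x := by
  rcases lt_or_ge ν 1 with h | h
  · nlinarith [mul_nonneg h0 hx.le]
  · have hν1 : ν = 1 := le_antisymm h1 h
    simpa [hν1] using hx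

private lemma hasDeriv1 {ν : ℝ} (h0 : 0 ≤ ν) (h1 : ν ≤ 1) {y : ℝ} (hy : 0 < y) :
    HasDerivAt (fun y => Real.log (1 - ν + ν * y) - ν * Real.log y
      - ν * (1 - ν) / 2 * (1 - y⁻¹) ^ 2)
      (ν * (1 - ν) * (y - 1) ^ 2 * (y + 1 - ν) / ((1 - ν + ν * y) * y ^ 3)) y := by
  have hD := Dpos hy h0 h1
  have hA : HasDerivAt (fun y : ℝ => 1 - ν + ν * y) ν y := by
    simpa using ((hasDerivAt_id y).const_mul ν).const_add (1 - ν)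
  have hlog1 := hA.log hD.ne'
  have hlog2 := (Real.hasDerivAt_log hy.ne').const_mul ν
  have hsq : HasDerivAt (fun y : ℝ => ν * (1 - ν) / 2 * (1 - y⁻¹) ^ 2)
      (ν * (1 - ν) / 2 * ((2 : ℕ) * (1 - y⁻¹) ^ 1 * -(-(y ^ 2)⁻¹))) y :=
    (((hasDerivAt_inv hy.ne').const_sub 1).pow 2).const_mul _
  have h := (hlog1.sub hlog2).sub hsq
  refine h.congr_deriv ?_
  field_simp
  ring

private lemma hasDeriv2 {ν : ℝ} (h0 : 0 ≤ ν) (h1 : ν ≤ 1) {y : ℝ} (hy : 0 < y) :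
    HasDerivAt (fun y => Real.log (1 - ν + ν * y) - ν * Real.log y
      - ν * (1 - ν) / 2 * (y - 1) ^ 2)
      (-(ν * (1 - ν) * (y - 1) ^ 2 * (ν * y + 1)) / ((1 - ν + ν * y) * y)) y := by
  have hD := Dpos hy h0 h1
  have hA : HasDerivAt (fun y : ℝ => 1 - ν + ν * y) ν y := by
    simpa using ((hasDerivAt_id y).const_mul ν).const_add (1 - ν)
  have hlog1 := hA.log hD.ne'
  have hlog2 := (Real.hasDerivAt_log hy.ne').const_mul ν
  have hsq : HasDerivAt (fun y : ℝ => ν * (1 - ν) / 2 * (y - 1) ^ 2)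
      (ν * (1 - ν) / 2 * ((2 : ℕ) * (y - 1) ^ 1 * 1)) y :=
    (((hasDerivAt_id y).sub_const 1).pow 2).const_mul _
  have h := (hlog1.sub hlog2).sub hsq
  refine h.congr_deriv ?_
  field_simp
  ring

private lemma mono1 {ν : ℝ} (h0 : 0 ≤ ν) (h1 : ν ≤ 1) :
    MonotoneOn (fun y => Real.log (1 - ν + ν * y) - ν * Real.log y
      - ν * (1 - ν) / 2 * (1 - y⁻¹) ^ 2) (Set.Ioi 0) := by
  apply monotoneOn_of_deriv_nonneg (convex_Ioi 0)
  · exact fun y hy => ((hasDeriv1 h0 h1 hy).differentiableAt).continuousAt.continuousWithinAt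
  · rw [interior_Ioi]
    exact fun y hy => ((hasDeriv1 h0 h1 hy).differentiableAt).differentiableWithinAt
  · rw [interior_Ioi]
    intro y hy
    simp only [Set.mem_Ioi] at hy
    rw [(hasDeriv1 h0 h1 hy).deriv]
    apply div_nonneg
    · have h2 : 0 ≤ y + 1 - ν := by linarith
      have h3 : 0 ≤ 1 - ν := by linarith
      exact mul_nonneg (mul_nonneg (mul_nonneg h0 h3) (sq_nonneg _)) h2
    · exact le_of_lt (mul_pos (Dpos hy h0 h1) (pow_pos hy 3))

private lemma anti2 {ν : ℝ} (h0 : 0 ≤ ν) (h1 : ν ≤ 1) :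
    AntitoneOn (fun y => Real.log (1 - ν + ν * y) - ν * Real.log y
      - ν * (1 - ν) / 2 * (y - 1) ^ 2) (Set.Ioi 0) := by
  apply antitoneOn_of_deriv_nonpos (convex_Ioi 0)
  · exact fun y hy => ((hasDeriv2 h0 h1 hy).differentiableAt).continuousAt.continuousWithinAt
  · rw [interior_Ioi]
    exact fun y hy => ((hasDeriv2 h0 h1 hy).differentiableAt).differentiableWithinAt
  · rw [interior_Ioi]
    intro y hy
    simp only [Set.mem_Ioi] at hy
    rw [(hasDeriv2 h0 h1 hy).deriv]
    apply div_nonpos_of_nonpos_of_nonneg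
    · have hνy : 0 ≤ ν * y + 1 := by nlinarith
      have h3 : 0 ≤ 1 - ν := by linarith
      have : 0 ≤ ν * (1 - ν) * (y - 1) ^ 2 * (ν * y + 1) :=
        mul_nonneg (mul_nonneg (mul_nonneg h0 h3) (sq_nonneg _)) hνy
      linarith
    · exact le_of_lt (mul_pos (Dpos hy h0 h1) hy)

theorem stmt_10 (x : ℝ) (hx : 0 < x) (ν : ℝ) (hν : ν ∈ Set.Icc (0:ℝ) 1) :
    Real.exp (1/2 * ν * (1 - ν) * (1 - min 1 x / max 1 x)^2) * x ^ ν ≤ 1 - ν + ν * x ∧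
    1 - ν + ν * x ≤ Real.exp (1/2 * ν * (1 - ν) * (max 1 x / min 1 x - 1)^2) * x ^ ν := by
  obtain ⟨h0, h1⟩ := hν
  have hD := Dpos hx h0 h1
  have hx1 : (1 : ℝ) ∈ Set.Ioi (0:ℝ) := by norm_num
  have hxm : x ∈ Set.Ioi (0:ℝ) := hx
  have hF1_1 : Real.log (1 - ν + ν * 1) - ν * Real.log 1
      - ν * (1 - ν) / 2 * (1 - (1:ℝ)⁻¹) ^ 2 = 0 := by norm_num
  have hF2_1 : Real.log (1 - ν + ν * 1) - ν * Real.log 1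
      - ν * (1 - ν) / 2 * ((1:ℝ) - 1) ^ 2 = 0 := by norm_num
  -- rewrite x ^ ν
  rw [Real.rpow_def_of_pos hx, ← Real.exp_add, ← Real.exp_add,
    ← Real.exp_log hD, Real.exp_le_exp, Real.exp_le_exp]
  rcases le_total 1 x with hge | hle
  · rw [min_eq_left hge, max_eq_right hge]
    constructor
    · -- lower bound, x ≥ 1 : use F1 monotone, F1 1 ≤ F1 x
      have := mono1 h0 h1 hx1 hxm hge
      simp only [] at this
      rw [hF1_1] at this
      have hrw : (1 : ℝ) - 1 / x = 1 - x⁻¹ := by rw [one_div]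
      rw [hrw]
      nlinarith [this]
    · -- upper bound, x ≥ 1 : use F2 antitone, F2 x ≤ F2 1
      have := anti2 h0 h1 hx1 hxm hge
      simp only [] at this
      rw [hF2_1] at this
      have hrw : (x / 1 - 1 : ℝ) = x - 1 := by ring
      rw [hrw]
      nlinarith [this]
  · rw [min_eq_right hle, max_eq_left hle]
    constructor
    · -- lower bound, x ≤ 1 : use F2 antitone, F2 1 ≤ F2 x
      have := anti2 h0 h1 hxm hx1 hle
      simp only [] at this
      rw [hF2_1] at this
      have hrw : ((1:ℝ) - x / 1) ^ 2 = (x - 1) ^ 2 := by ring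
      rw [hrw]
      nlinarith [this]
    · -- upper bound, x ≤ 1 : use F1 monotone, F1 x ≤ F1 1
      have := mono1 h0 h1 hxm hx1 hle
      simp only [] at this
      rw [hF1_1] at this
      have hrw : ((1:ℝ) / x - 1) ^ 2 = (1 - x⁻¹) ^ 2 := by rw [one_div]; ring
      rw [hrw]
      nlinarith [this]
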